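/- For 0 ≤ ε, δ and unitaries A, B on a Hilbert space H with unit vector ψ such that Re⟨ψ, Aψ⟩ ≥ 1 − ε and Re⟨ψ, Bψ⟩ ≥ 1 − δ, it holds that Re⟨ψ, ABψ⟩ ≥ 1 − (√ε + √δ)². -/

import Mathlib

/-- for `0 ≤ ε, δ`, unitaries `A, B` on a Hilbert space and a unit vector `ψ`
with `Re⟨ψ, Aψ⟩ ≥ 1 − ε` and `Re⟨ψ, Bψ⟩ ≥ 1 − δ`, one has
`Re⟨ψ, ABψ⟩ ≥ 1 − (√ε + √δ)²`. -/
theorem stmt10 {H : Type*} [NormedAddCommGroup H] [InnerProductSpace ℂ H] [CompleteSpace H]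
    (ε δ : ℝ) (hε : 0 ≤ ε) (hδ : 0 ≤ δ)
    (A B : H →L[ℂ] H)
    (hA : A ∈ unitary (H →L[ℂ] H)) (hB : B ∈ unitary (H →L[ℂ] H))
    (ψ : H) (hψ : ‖ψ‖ = 1)
    (h1 : 1 - ε ≤ (inner ℂ ψ (A ψ) : ℂ).re)
    (h2 : 1 - δ ≤ (inner ℂ ψ (B ψ) : ℂ).re) :
    1 - (Real.sqrt ε + Real.sqrt δ) ^ 2 ≤ (inner ℂ ψ ((A * B) ψ) : ℂ).re := by
  obtain ⟨hA1, hA2⟩ := Unitary.mem_iff.mp hA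
  obtain ⟨hB1, hB2⟩ := Unitary.mem_iff.mp hB
  have hadjA : ∀ x y : H, (inner ℂ (ContinuousLinearMap.adjoint A x) y : ℂ) = inner ℂ x (A y) :=
    fun x y => ContinuousLinearMap.adjoint_inner_left A y x
  have hadjB : ∀ x y : H, (inner ℂ (ContinuousLinearMap.adjoint B x) y : ℂ) = inner ℂ x (B y) :=
    fun x y => ContinuousLinearMap.adjoint_inner_left B y x
  have hψ2 : (inner ℂ ψ ψ : ℂ) = 1 := by
    rw [inner_self_eq_norm_sq_to_K, hψ]; norm_num
  set A' := ContinuousLinearMap.adjoint A with hA'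
  have hsA : star A = A' := ContinuousLinearMap.star_eq_adjoint A
  rw [hsA] at hA1 hA2
  have hAA' : ∀ x : H, A (A' x) = x := by
    intro x
    have : (A * A') x = (1 : H →L[ℂ] H) x := by rw [hA2]
    simpa [ContinuousLinearMap.mul_apply] using this
  have hB'B : ∀ x : H, (ContinuousLinearMap.adjoint B) (B x) = x := by
    intro x
    rw [ContinuousLinearMap.star_eq_adjoint] at hB1
    have : (ContinuousLinearMap.adjoint B * B) x = (1 : H →L[ℂ] H) x := by rw [hB1]
    simpa [ContinuousLinearMap.mul_apply] using this
  set u := ψ - A' ψ with hu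
  set v := ψ - B ψ with hv
  -- norms
  have hnA' : ‖A' ψ‖ ^ 2 = 1 := by
    have e : (inner ℂ (A' ψ) (A' ψ) : ℂ) = inner ℂ ψ ψ := by
      rw [hadjA, hAA']
    have h := congrArg Complex.re e
    rw [hψ2] at h
    rw [← inner_self_eq_norm_sq (𝕜 := ℂ)]
    simpa using h
  have hnB : ‖B ψ‖ ^ 2 = 1 := by
    have e : (inner ℂ (B ψ) (B ψ) : ℂ) = inner ℂ ψ ψ := by
      have := hadjB (B ψ) ψ
      rw [hB'B] at this
      exact this.symm
    have h := congrArg Complex.re e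
    rw [hψ2] at h
    rw [← inner_self_eq_norm_sq (𝕜 := ℂ)]
    simpa using h
  have hreA' : (inner ℂ ψ (A' ψ) : ℂ).re = (inner ℂ ψ (A ψ) : ℂ).re := by
    rw [← inner_conj_symm, hadjA]
    exact Complex.conj_re _
  have hu2 : ‖u‖ ^ 2 ≤ 2 * ε := by
    have h := norm_sub_sq (𝕜 := ℂ) ψ (A' ψ)
    rw [hψ, hnA'] at h
    simp only [RCLike.re_to_complex] at h
    rw [hu, h, hreA']
    nlinarith [h1]
  have hv2 : ‖v‖ ^ 2 ≤ 2 * δ := by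
    have h := norm_sub_sq (𝕜 := ℂ) ψ (B ψ)
    rw [hψ, hnB] at h
    simp only [RCLike.re_to_complex] at h
    rw [hv, h]
    nlinarith [h2]
  -- inner ℂ product expansion
  have huv : (inner ℂ u v : ℂ).re =
      1 - (inner ℂ ψ (B ψ) : ℂ).re - (inner ℂ ψ (A ψ) : ℂ).re + (inner ℂ ψ ((A * B) ψ) : ℂ).re := by
    have e : (inner ℂ u v : ℂ) =
        inner ℂ ψ ψ - inner ℂ ψ (B ψ) - inner ℂ (A' ψ) ψ + inner ℂ (A' ψ) (B ψ) := by
      rw [hu, hv, inner_sub_left, inner_sub_right, inner_sub_right]; ring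
    rw [hadjA, hadjA, ← ContinuousLinearMap.mul_apply, hψ2] at e
    have h := congrArg Complex.re e
    simp only [Complex.sub_re, Complex.add_re, Complex.one_re] at h
    rw [h]
  -- Cauchy-Schwarz
  have hcs : -(‖u‖ * ‖v‖) ≤ (inner ℂ u v : ℂ).re := by
    have hn := norm_inner_le_norm (𝕜 := ℂ) u v
    have ha : |(inner ℂ u v : ℂ).re| ≤ ‖(inner ℂ u v : ℂ)‖ := Complex.abs_re_le_norm _
    linarith [neg_abs_le ((inner ℂ u v : ℂ).re)]
  -- combine norms
  have hne : ‖u‖ * ‖v‖ ≤ 2 * Real.sqrt ε * Real.sqrt δ := by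
    have hu' : ‖u‖ ≤ Real.sqrt (2 * ε) := by
      rw [← Real.sqrt_sq (norm_nonneg u)]
      exact Real.sqrt_le_sqrt hu2
    have hv' : ‖v‖ ≤ Real.sqrt (2 * δ) := by
      rw [← Real.sqrt_sq (norm_nonneg v)]
      exact Real.sqrt_le_sqrt hv2
    calc ‖u‖ * ‖v‖ ≤ Real.sqrt (2 * ε) * Real.sqrt (2 * δ) :=
          mul_le_mul hu' hv' (norm_nonneg v) (Real.sqrt_nonneg _)
      _ = 2 * Real.sqrt ε * Real.sqrt δ := by
          rw [Real.sqrt_mul (by norm_num : (0:ℝ) ≤ 2),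
            Real.sqrt_mul (by norm_num : (0:ℝ) ≤ 2)]
          have h22 : Real.sqrt 2 * Real.sqrt 2 = 2 := Real.mul_self_sqrt (by norm_num)
          linear_combination (Real.sqrt ε * Real.sqrt δ) * h22
  have hsq : (Real.sqrt ε + Real.sqrt δ) ^ 2 = ε + 2 * Real.sqrt ε * Real.sqrt δ + δ := by
    linear_combination Real.sq_sqrt hε + Real.sq_sqrt hδ
  linarith [huv, hcs, hne, h1, h2]
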